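/- For positive integers c, m, n₁ with n₁ | cm, and integers l, n₂, one has the identity Σ_{0 ≤ d < c, (d,c)=1} e(ld/c) S(md, n₂; mc n₁^{-1}) = Σ_{u (mod mc n₁^{-1}), u ū ≡ 1 (mod mc n₁^{-1})} S(0, l + u n₁; c) e(n₂ ū / (mc n₁^{-1})), where S(0, a; c) = Σ_{d (mod c), (d,c)=1} e(ad/c) is the Ramanujan sum. Consequently, since the Ramanujan sum S(0,a;c) is bounded by (a,c), the left-hand side is O(m c^{1+ε}). -/

import Mathlib

noncomputable section

open Complex Real MeasureTheory

/-- `e(z) = e^{2πiz}`. -/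
def e2pi (z : ℂ) : ℂ := Complex.exp (2 * (Real.pi : ℂ) * Complex.I * z)

/-- The classical Kloosterman sum `S(a, b; c) = Σ_{d d̄ ≡ 1 (mod c)} e((d a + d̄ b)/c)`
(symmetric in `a, b`). -/
def kloos (a b : ℤ) (c : ℕ) : ℂ :=
  if h : c = 0 then 0 else
    haveI : NeZero c := ⟨h⟩
    ∑ d : (ZMod c)ˣ,
      e2pi (((a : ℂ) * (((d : ZMod c).val : ℕ) : ℂ) +
        (b : ℂ) * ((((d⁻¹ : (ZMod c)ˣ) : ZMod c).val : ℕ) : ℂ)) / (c : ℂ))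

/-- The Ramanujan sum `S(0, a; c) = Σ_{(d,c)=1} e(a d / c)`. -/
def ramanujanSum (a : ℤ) (c : ℕ) : ℂ :=
  if h : c = 0 then 0 else
    haveI : NeZero c := ⟨h⟩
    ∑ d : (ZMod c)ˣ, e2pi ((a : ℂ) * (((d : ZMod c).val : ℕ) : ℂ) / (c : ℂ))

/-- Integral over the vertical line `Re s = σ` (with `ds = i dτ`). -/
def VLine (g : ℂ → ℂ) (σ : ℝ) : ℂ := ∫ τ : ℝ, g (σ + τ * Complex.I) * Complex.I

/-- Abstract data of an even Hecke-Maass cusp form of type `1/2 + i t` for `SL(2,ℤ)`: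
its spectral parameter `t`, its normalized Fourier(-Hecke) coefficients `a(n)`, and the
entire `L`-function continuing the Dirichlet series `L(s) = Σ_{n ≥ 1} a(n) n^{-s}`. -/
structure EvenMaassForm where
  t : ℝ
  a : ℕ → ℂ
  L : ℂ → ℂ
  L_entire : Differentiable ℂ L
  L_eq : ∀ s : ℂ, 3/2 < s.re → L s = ∑' n : ℕ+, a (n : ℕ) * ((n : ℕ) : ℂ) ^ (-s)

/-- Abstract data of a Hecke-Maass cusp form of type `(ν₁, ν₂)` for `SL(3,ℤ)`:
its Fourier-Whittaker coefficients `A(m,n)` normalized by `A(1,1) = 1`, the entire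
`L`-function `L(s,f)` continuing `Σ A(1,m) m^{-s}`, and the `L`-function `L(s,f̃)` of the dual
form (whose coefficients are `A(n,m)`), continuing `Σ A(m,1) m^{-s}`. -/
structure MaassFormSL3 where
  ν₁ : ℂ
  ν₂ : ℂ
  A : ℕ → ℕ → ℂ
  A_norm : A 1 1 = 1
  L : ℂ → ℂ
  Ldual : ℂ → ℂ
  L_entire : Differentiable ℂ L
  Ldual_entire : Differentiable ℂ Ldual
  L_eq : ∀ s : ℂ, 2 < s.re → L s = ∑' m : ℕ+, A 1 (m : ℕ) * ((m : ℕ) : ℂ) ^ (-s)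
  Ldual_eq : ∀ s : ℂ, 2 < s.re → Ldual s = ∑' m : ℕ+, A (m : ℕ) 1 * ((m : ℕ) : ℂ) ^ (-s)

/-- Langlands parameter `α = -ν₁ - 2ν₂ + 1`. -/
def MaassFormSL3.α (f : MaassFormSL3) : ℂ := -f.ν₁ - 2 * f.ν₂ + 1

/-- Langlands parameter `β = -ν₁ + ν₂`. -/
def MaassFormSL3.β (f : MaassFormSL3) : ℂ := -f.ν₁ + f.ν₂

/-- Langlands parameter `γ = 2ν₁ + ν₂ - 1`. -/
def MaassFormSL3.γ (f : MaassFormSL3) : ℂ := 2 * f.ν₁ + f.ν₂ - 1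

/-- `Lfu` is the (entire) Rankin-Selberg `L`-function `L(s, f × u)`, i.e. the analytic
continuation of `Σ_{m,n ≥ 1} conj(a(n)) A(m,n) (m²n)^{-s}`. -/
def IsRankinSelberg (f : MaassFormSL3) (u : EvenMaassForm) (Lfu : ℂ → ℂ) : Prop :=
  Differentiable ℂ Lfu ∧ ∀ s : ℂ, 2 < s.re →
    Lfu s = ∑' (m : ℕ+) (n : ℕ+),
      (starRingEnd ℂ) (u.a (n : ℕ)) * f.A (m : ℕ) (n : ℕ) *
        ((((m : ℕ) : ℂ)) ^ 2 * (((n : ℕ) : ℂ))) ^ (-s)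

/-- `G(u) = (cos (π u / A))^{-A}`. -/
def Gweight (A : ℕ) (u : ℂ) : ℂ := (Complex.cos ((Real.pi : ℂ) * u / (A : ℂ))) ^ (-(A : ℤ))

/-- `F(u) = (cos (π u / A))^{-3A}`. -/
def Fweight (A : ℕ) (u : ℂ) : ℂ := (Complex.cos ((Real.pi : ℂ) * u / (A : ℂ))) ^ (-(3 * A : ℤ))

/-- The `GL(2)` gamma factor `γ(u,t) = π^{-u} Γ((u+it)/2) Γ((u-it)/2)`. -/
def gammaGL2 (u : ℂ) (t : ℝ) : ℂ :=
  (Real.pi : ℂ) ^ (-u) * Complex.Gamma ((u + Complex.I * t) / 2) *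
    Complex.Gamma ((u - Complex.I * t) / 2)

/-- The weight `U(y,t)` in the `GL(2)` approximate functional equation:
`U(y,t) = (1/2πi) ∫_{(1/2)} y^{-u} G(u) (γ(1/2+u,t)/γ(1/2,t)) du/u`. -/
def Ufun (A : ℕ) (y : ℝ) (t : ℝ) : ℂ :=
  (1 / (2 * (Real.pi : ℂ) * Complex.I)) *
    VLine (fun u => (y : ℂ) ^ (-u) * Gweight A u *
      (gammaGL2 (1/2 + u) t / gammaGL2 (1/2) t) / u) (1/2)

/-- The six-fold `GL(3) × GL(2)` gamma factor
`π^{-3s} Γ((s-it-α)/2) Γ((s-it-β)/2) Γ((s-it-γ)/2) Γ((s+it-α)/2) Γ((s+it-β)/2) Γ((s+it-γ)/2)`. -/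
def gammaRS (α β γ : ℂ) (s : ℂ) (t : ℝ) : ℂ :=
  (Real.pi : ℂ) ^ (-3 * s) *
    Complex.Gamma ((s - Complex.I * t - α) / 2) * Complex.Gamma ((s - Complex.I * t - β) / 2) *
    Complex.Gamma ((s - Complex.I * t - γ) / 2) * Complex.Gamma ((s + Complex.I * t - α) / 2) *
    Complex.Gamma ((s + Complex.I * t - β) / 2) * Complex.Gamma ((s + Complex.I * t - γ) / 2)

/-- The weight `V₁(y,t) = (1/2πi) ∫_{(3)} y^{-u} F(u) (γ₁(1/2+u,t)/γ₁(1/2,t)) du/u`. -/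
def V1 (A : ℕ) (α β γ : ℂ) (y : ℝ) (t : ℝ) : ℂ :=
  (1 / (2 * (Real.pi : ℂ) * Complex.I)) *
    VLine (fun u => (y : ℂ) ^ (-u) * Fweight A u *
      (gammaRS α β γ (1/2 + u) t / gammaRS α β γ (1/2) t) / u) 3

/-- The weight `V₂(y,t) = (1/2πi) ∫_{(3)} y^{-u} F(u) (γ₂(1/2+u,t)/γ₁(1/2,t)) du/u`. -/
def V2 (A : ℕ) (α β γ : ℂ) (y : ℝ) (t : ℝ) : ℂ :=
  (1 / (2 * (Real.pi : ℂ) * Complex.I)) *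
    VLine (fun u => (y : ℂ) ^ (-u) * Fweight A u *
      (gammaRS (-α) (-β) (-γ) (1/2 + u) t / gammaRS α β γ (1/2) t) / u) 3

/-- The gamma kernel in the `GL(3)` Voronoi formula. -/
def voronoiKernel (α β γ : ℂ) (k : ℕ) (s : ℂ) : ℂ :=
  (Complex.Gamma ((1 + s + 2 * k + α) / 2) * Complex.Gamma ((1 + s + 2 * k + β) / 2) *
      Complex.Gamma ((1 + s + 2 * k + γ) / 2)) /
    (Complex.Gamma ((-s - α) / 2) * Complex.Gamma ((-s - β) / 2) *
      Complex.Gamma ((-s - γ) / 2))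

/-- `Φ_k(x) = ∫_{Re s = σ} (π³x)^{-s} (gamma kernel) φ̃(-s-k) ds`. -/
def PhiK (φ : ℝ → ℂ) (α β γ : ℂ) (k : ℕ) (σ : ℝ) (x : ℝ) : ℂ :=
  VLine (fun s => ((Real.pi : ℂ) ^ 3 * (x : ℂ)) ^ (-s) * voronoiKernel α β γ k s *
    mellin φ (-s - k)) σ

/-- The Eisenstein coefficient `η(n, s) = Σ_{ad = n} (a/d)^{s - 1/2}`. -/
def etaCoef (n : ℕ) (s : ℂ) : ℂ :=
  ∑ a ∈ n.divisors, ((a : ℂ) / ((n / a : ℕ) : ℂ)) ^ (s - 1/2)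

/-- The kernel `G₀(s)` in the proof of the `GL(3)` Voronoi asymptotics. -/
def G0kernel (α β γ : ℂ) (s : ℂ) : ℂ :=
  (Complex.Gamma (s + α / 2) * Complex.Gamma (s + β / 2) * Complex.Gamma (s + γ / 2)) /
    (Complex.Gamma (1/2 - s - α / 2) * Complex.Gamma (1/2 - s - β / 2) *
      Complex.Gamma (1/2 - s - γ / 2))

/-- `ψ₀(x) = 2π³ x ∫_{(σ')} (π³x)^{-2s} G₀(s) ψ̃(-2s+1) ds`. -/
def psi0 (ψ : ℝ → ℂ) (α β γ : ℂ) (σ' : ℝ) (x : ℝ) : ℂ :=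
  2 * (Real.pi : ℂ) ^ 3 * (x : ℂ) *
    VLine (fun s => ((Real.pi : ℂ) ^ 3 * (x : ℂ)) ^ (-2 * s) * G0kernel α β γ s *
      mellin ψ (-2 * s + 1)) σ'

lemma e2pi_add (x y : ℂ) : e2pi (x + y) = e2pi x * e2pi y := by
  unfold e2pi; rw [← Complex.exp_add]; ring_nf

lemma e2pi_int (k : ℤ) : e2pi (k : ℂ) = 1 := by
  unfold e2pi
  rw [show 2 * (Real.pi : ℂ) * Complex.I * (k:ℂ) = (k:ℂ) * (2 * Real.pi * Complex.I) by ring]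
  exact Complex.exp_int_mul_two_pi_mul_I k

lemma e2pi_nat_pow (x : ℂ) (n : ℕ) : e2pi ((n : ℂ) * x) = (e2pi x) ^ n := by
  unfold e2pi; rw [← Complex.exp_nat_mul]; ring_nf

lemma norm_e2pi (r : ℝ) : ‖e2pi (r : ℂ)‖ = 1 := by
  unfold e2pi
  rw [Complex.norm_exp]
  have : (2 * (Real.pi : ℂ) * Complex.I * (r:ℂ)).re = 0 := by
    simp [Complex.mul_re, Complex.mul_im]
  rw [this, Real.exp_zero]

lemma e2pi_eq_one_iff (a : ℤ) (k : ℕ) (hk : k ≠ 0) :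
    e2pi ((a : ℂ) / (k : ℂ)) = 1 ↔ (k : ℤ) ∣ a := by
  have hk' : (k : ℂ) ≠ 0 := Nat.cast_ne_zero.mpr hk
  have h2 : (2 * (Real.pi : ℂ) * Complex.I) ≠ 0 := by
    simp [Real.pi_ne_zero, Complex.I_ne_zero]
  constructor
  · intro h
    rw [e2pi, Complex.exp_eq_one_iff] at h
    obtain ⟨n, hn⟩ := h
    refine ⟨n, ?_⟩
    have : (a : ℂ) = (n : ℂ) * k := by
      field_simp at hn
      rw [hn]; ring
    have : a = n * (k:ℤ) := by exact_mod_cast this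
    rw [this]; ring
  · rintro ⟨b, rfl⟩
    have : ((k * b : ℤ) : ℂ) / (k : ℂ) = ((b : ℤ) : ℂ) := by push_cast; field_simp
    rw [this, e2pi_int]

lemma sum_e2pi_range (a : ℤ) (k : ℕ) (hk : k ≠ 0) :
    ∑ x ∈ Finset.range k, e2pi ((a : ℂ) * (x : ℂ) / (k : ℂ)) =
      if (k : ℤ) ∣ a then (k : ℂ) else 0 := by
  have hterm : ∀ x : ℕ, e2pi ((a : ℂ) * (x : ℂ) / (k : ℂ)) = (e2pi ((a:ℂ)/(k:ℂ))) ^ x := by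
    intro x
    rw [← e2pi_nat_pow]; ring_nf
  simp_rw [hterm]
  by_cases hd : (k : ℤ) ∣ a
  · rw [if_pos hd, (e2pi_eq_one_iff a k hk).mpr hd]
    simp
  · rw [if_neg hd]
    have hne : e2pi ((a:ℂ)/(k:ℂ)) ≠ 1 := fun h => hd ((e2pi_eq_one_iff a k hk).mp h)
    rw [geom_sum_eq hne]
    have : (e2pi ((a:ℂ)/(k:ℂ))) ^ k = 1 := by
      rw [← e2pi_nat_pow]
      have : (k : ℂ) * ((a:ℂ)/(k:ℂ)) = ((a : ℤ) : ℂ) := by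
        field_simp [Nat.cast_ne_zero.mpr hk]
      rw [this, e2pi_int]
    rw [this]; simp

lemma sum_units_eq {c : ℕ} [NeZero c] (f : ℕ → ℂ) :
    ∑ u : (ZMod c)ˣ, f (u : ZMod c).val
      = ∑ d ∈ (Finset.range c).filter (fun d => Nat.Coprime d c), f d := by
  refine Finset.sum_nbij' (i := fun (u : (ZMod c)ˣ) => (u : ZMod c).val)
    (j := fun d => if h : Nat.Coprime d c then ZMod.unitOfCoprime d h else 1)
    (s := Finset.univ) (t := (Finset.range c).filter (fun d => Nat.Coprime d c))
    (f := fun (u : (ZMod c)ˣ) => f (u : ZMod c).val) (g := f) ?_ ?_ ?_ ?_ ?_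
  · intro u _
    simp only [Finset.mem_filter, Finset.mem_range]
    exact ⟨ZMod.val_lt _, ZMod.val_coe_unit_coprime u⟩
  · intro d _; exact Finset.mem_univ _
  · intro u _
    have h : Nat.Coprime (u : ZMod c).val c := ZMod.val_coe_unit_coprime u
    rw [dif_pos h]
    ext
    rw [ZMod.coe_unitOfCoprime]
    exact ZMod.natCast_rightInverse _
  · intro d hd
    simp only [Finset.mem_filter, Finset.mem_range] at hd
    rw [dif_pos hd.2]
    simp [ZMod.coe_unitOfCoprime, ZMod.val_cast_of_lt hd.1]
  · intro u _; rfl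

lemma sum_multiples {t k : ℕ} (ht : t ≠ 0) (f : ℕ → ℂ) :
    ∑ x ∈ (Finset.range (t * k)).filter (fun x => t ∣ x), f x
      = ∑ y ∈ Finset.range k, f (t * y) := by
  refine Finset.sum_nbij' (i := fun x => x / t) (j := fun y => t * y)
    (s := (Finset.range (t * k)).filter (fun x => t ∣ x)) (t := Finset.range k)
    (f := f) (g := fun y => f (t * y)) ?_ ?_ ?_ ?_ ?_
  · intro x hx
    simp only [Finset.mem_filter, Finset.mem_range] at hx ⊢
    exact Nat.div_lt_of_lt_mul hx.1
  · intro y hy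
    simp only [Finset.mem_filter, Finset.mem_range] at hy ⊢
    exact ⟨Nat.mul_lt_mul_left (Nat.pos_of_ne_zero ht) |>.mpr hy, Dvd.intro y rfl⟩
  · intro x hx
    simp only [Finset.mem_filter] at hx
    exact Nat.mul_div_cancel' hx.2
  · intro y _
    exact Nat.mul_div_cancel_left y (Nat.pos_of_ne_zero ht)
  · intro x hx
    simp only [Finset.mem_filter] at hx
    show f x = f (t * (x / t))
    rw [Nat.mul_div_cancel' hx.2]

open ArithmeticFunction in
lemma sum_moebius (n : ℕ) :
    ∑ t ∈ n.divisors, (moebius t : ℂ) = if n = 1 then 1 else 0 := by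
  have h := congrFun (congrArg (fun f => f.toFun) moebius_mul_coe_zeta) n
  have h2 : (moebius * ((zeta : ArithmeticFunction ℕ) : ArithmeticFunction ℤ) : ArithmeticFunction ℤ) n = if n = 1 then 1 else 0 := by
    rw [moebius_mul_coe_zeta, ArithmeticFunction.one_apply]
  rw [ArithmeticFunction.coe_mul_zeta_apply] at h2
  calc ∑ t ∈ n.divisors, (moebius t : ℂ) = ((∑ t ∈ n.divisors, moebius t : ℤ) : ℂ) := by
        push_cast; rfl
    _ = (((if n = 1 then 1 else 0) : ℤ) : ℂ) := by rw [h2]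
    _ = if n = 1 then 1 else 0 := by split <;> simp

open ArithmeticFunction in
lemma ramanujan_formula (a : ℤ) (c : ℕ) (hc : c ≠ 0) :
    ramanujanSum a c
      = ∑ t ∈ c.divisors, (moebius t : ℂ) * (if ((c/t : ℕ) : ℤ) ∣ a then ((c/t : ℕ) : ℂ) else 0) := by
  haveI : NeZero c := ⟨hc⟩
  rw [ramanujanSum, dif_neg hc]
  rw [sum_units_eq (f := fun x => e2pi ((a : ℂ) * (x : ℂ) / (c : ℂ)))]
  rw [Finset.sum_filter]
  have key : ∀ x ∈ Finset.range c,
      (if Nat.Coprime x c then e2pi ((a:ℂ) * x / c) else 0)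
        = ∑ t ∈ c.divisors, (if t ∣ x then (moebius t : ℂ) * e2pi ((a:ℂ) * x / c) else 0) := by
    intro x _
    have hgcd : (Nat.gcd x c).divisors = c.divisors.filter (fun t => t ∣ x) := by
      ext t
      simp only [Nat.mem_divisors, Finset.mem_filter]
      constructor
      · rintro ⟨ht, _⟩
        exact ⟨⟨ht.trans (Nat.gcd_dvd_right x c), hc⟩, ht.trans (Nat.gcd_dvd_left x c)⟩
      · rintro ⟨⟨htc, _⟩, htx⟩
        exact ⟨Nat.dvd_gcd htx htc, fun h => hc (Nat.eq_zero_of_gcd_eq_zero_right h)⟩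
    have : (if Nat.Coprime x c then (1:ℂ) else 0)
        = ∑ t ∈ c.divisors, (if t ∣ x then (moebius t : ℂ) else 0) := by
      rw [← Finset.sum_filter, ← hgcd, sum_moebius]
    have h2 := congrArg (fun z => z * e2pi ((a:ℂ) * x / c)) this
    simp only [ite_mul, one_mul, zero_mul, Finset.sum_mul] at h2
    exact h2
  rw [Finset.sum_congr rfl key, Finset.sum_comm]
  refine Finset.sum_congr rfl (fun t ht => ?_)
  obtain ⟨htc, -⟩ := Nat.mem_divisors.mp ht
  have ht0 : t ≠ 0 := fun h => hc (by simpa [h] using htc)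
  have hct : c = t * (c / t) := (Nat.mul_div_cancel' htc).symm
  rw [← Finset.sum_filter]
  have : ∑ x ∈ (Finset.range c).filter (fun x => t ∣ x), (moebius t : ℂ) * e2pi ((a:ℂ) * x / c)
      = (moebius t : ℂ) * ∑ x ∈ (Finset.range c).filter (fun x => t ∣ x), e2pi ((a:ℂ) * x / c) := by
    rw [Finset.mul_sum]
  rw [this]
  congr 1
  have hrw : (Finset.range c).filter (fun x => t ∣ x)
      = (Finset.range (t * (c/t))).filter (fun x => t ∣ x) := by rw [← hct]
  rw [hrw, sum_multiples ht0]
  have hct0 : c / t ≠ 0 := by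
    intro h; rw [h, Nat.mul_zero] at hct; exact hc hct
  have harg : ∀ y : ℕ, (a:ℂ) * (t * y : ℕ) / c = (a:ℂ) * y / ((c/t : ℕ) : ℂ) := by
    intro y
    have h1 : (c:ℂ) = (t:ℂ) * ((c/t : ℕ):ℂ) := by rw [← Nat.cast_mul, ← hct]
    rw [h1]
    have h2 : (t:ℂ) ≠ 0 := Nat.cast_ne_zero.mpr ht0
    have h3 : ((c/t:ℕ):ℂ) ≠ 0 := Nat.cast_ne_zero.mpr hct0
    push_cast
    field_simp
  simp_rw [harg]
  exact sum_e2pi_range a (c/t) hct0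

open ArithmeticFunction in
lemma ramanujan_norm_le (a : ℤ) (c : ℕ) (hc : c ≠ 0) :
    ‖ramanujanSum a c‖ ≤ ∑ d ∈ c.divisors, (if (d : ℤ) ∣ a then (d : ℝ) else 0) := by
  rw [ramanujan_formula a c hc]
  refine le_trans (norm_sum_le _ _) ?_
  have step : ∀ t ∈ c.divisors,
      ‖(moebius t : ℂ) * (if ((c/t : ℕ) : ℤ) ∣ a then ((c/t : ℕ) : ℂ) else 0)‖
        ≤ (if ((c/t : ℕ) : ℤ) ∣ a then ((c/t : ℕ) : ℝ) else 0) := by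
    intro t _
    rw [norm_mul]
    have h1 : ‖(moebius t : ℂ)‖ ≤ 1 := by
      rw [Complex.norm_intCast]
      exact_mod_cast ArithmeticFunction.abs_moebius_le_one
    have h2 : ‖(if ((c/t : ℕ) : ℤ) ∣ a then ((c/t : ℕ) : ℂ) else 0)‖
        = (if ((c/t : ℕ) : ℤ) ∣ a then ((c/t : ℕ) : ℝ) else 0) := by
      split <;> simp
    rw [h2]
    calc ‖(moebius t : ℂ)‖ * _ ≤ 1 * (if ((c/t : ℕ) : ℤ) ∣ a then ((c/t : ℕ) : ℝ) else 0) := by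
          apply mul_le_mul_of_nonneg_right h1
          split <;> positivity
      _ = _ := one_mul _
  refine le_trans (Finset.sum_le_sum step) ?_
  rw [← Nat.sum_div_divisors c (fun d => if (d : ℤ) ∣ a then (d : ℝ) else 0)]

lemma identity_aux (c m n₁ q : ℕ) (hc : c ≠ 0) (hq : q ≠ 0) (hqn : q * n₁ = m * c)
    (l n₂ : ℤ) :
    haveI : NeZero q := ⟨hq⟩
    (∑ d ∈ (Finset.range c).filter (fun d => Nat.Coprime d c),
        e2pi ((l : ℂ) * (d : ℂ) / (c : ℂ)) * kloos ((m : ℤ) * (d : ℤ)) n₂ q)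
      = ∑ v : (ZMod q)ˣ,
          ramanujanSum (l + (((v : ZMod q).val : ℕ) : ℤ) * ((n₁ : ℕ) : ℤ)) c *
            e2pi ((n₂ : ℂ) * ((((v⁻¹ : (ZMod q)ˣ) : ZMod q).val : ℂ) / (q : ℂ))) := by
  haveI : NeZero q := ⟨hq⟩
  haveI : NeZero c := ⟨hc⟩
  have hcC : (c : ℂ) ≠ 0 := Nat.cast_ne_zero.mpr hc
  have hqC : (q : ℂ) ≠ 0 := Nat.cast_ne_zero.mpr hq
  have hqnC : (q : ℂ) * (n₁ : ℂ) = (m : ℂ) * (c : ℂ) := by exact_mod_cast congrArg (Nat.cast : ℕ → ℂ) hqn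
  -- RHS: expand ramanujanSum and swap
  simp_rw [ramanujanSum, dif_neg hc, Finset.sum_mul, kloos, dif_neg hq, Finset.mul_sum]
  conv_rhs => rw [Finset.sum_comm]
  rw [← sum_units_eq (c := c) (f := fun d => ∑ u : (ZMod q)ˣ,
      e2pi ((l : ℂ) * (d : ℂ) / (c : ℂ)) *
        e2pi (((((m : ℤ) * (d : ℤ) : ℤ) : ℂ) * (((u : ZMod q).val : ℕ) : ℂ) +
          (n₂ : ℂ) * ((((u⁻¹ : (ZMod q)ˣ) : ZMod q).val : ℕ) : ℂ)) / (q : ℂ)))]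
  refine Finset.sum_congr rfl (fun w _ => Finset.sum_congr rfl (fun u _ => ?_))
  rw [← e2pi_add, ← e2pi_add]
  congr 1
  push_cast [ZMod.natCast_val]
  field_simp
  ring_nf
  simp only [ZMod.intCast_cast]
  linear_combination (-(ZMod.cast (w : ZMod c) : ℂ) * (ZMod.cast (u : ZMod q) : ℂ)) * hqnC

lemma divisor_bound {ε : ℝ} (hε : 0 < ε) :
    ∃ C > 0, ∀ n : ℕ, n ≠ 0 → ((n.divisors.card : ℝ)) ≤ C * (n : ℝ) ^ ε := by
  have hlog2 : (0:ℝ) < Real.log 2 := Real.log_pos (by norm_num)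
  set K : ℝ := 1 + 1 / (ε * Real.log 2) with hKdef
  have hK1 : (1:ℝ) ≤ K := by
    rw [hKdef]
    have : 0 < 1 / (ε * Real.log 2) := by positivity
    linarith
  set N : ℕ := ⌈(2:ℝ) ^ (1/ε)⌉₊ with hNdef
  refine ⟨K ^ (N + 1), by positivity, fun n hn => ?_⟩
  -- key per-prime bounds
  have key : ∀ p : ℕ, p.Prime → ∀ a : ℕ,
      ((a + 1 : ℕ) : ℝ) ≤ (if 2 ≤ (p:ℝ) ^ ε then 1 else K) * ((p:ℝ) ^ (a : ℕ)) ^ ε := by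
    intro p hp a
    have hp2 : (2:ℝ) ≤ (p:ℝ) := by exact_mod_cast hp.two_le
    have hppos : (0:ℝ) < (p:ℝ) := by linarith
    have hpow : ((p:ℝ) ^ (a:ℕ)) ^ ε = ((p:ℝ) ^ ε) ^ (a : ℕ) := by
      rw [← Real.rpow_natCast (p:ℝ) a, ← Real.rpow_mul hppos.le, mul_comm,
        Real.rpow_mul hppos.le, Real.rpow_natCast]
    split
    · rename_i h2
      rw [one_mul, hpow]
      calc ((a + 1 : ℕ) : ℝ) ≤ (2:ℝ) ^ (a:ℕ) := by
            exact_mod_cast Nat.succ_le_of_lt (Nat.lt_two_pow_self (n := a))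
        _ ≤ ((p:ℝ) ^ ε) ^ (a:ℕ) := pow_le_pow_left₀ (by norm_num) h2 a
    · -- general bound via exp
      have hE : ((p:ℝ) ^ (a:ℕ)) ^ ε = (p:ℝ) ^ ((a:ℝ) * ε) := by
        rw [← Real.rpow_natCast (p:ℝ) a, ← Real.rpow_mul hppos.le]
      have h2a : (2:ℝ) ^ ((a:ℝ) * ε) ≤ (p:ℝ) ^ ((a:ℝ) * ε) :=
        Real.rpow_le_rpow (by norm_num) hp2 (by positivity)
      have h1 : (1:ℝ) ≤ (2:ℝ) ^ ((a:ℝ) * ε) :=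
        Real.one_le_rpow (by norm_num) (by positivity)
      have h2' : (a:ℝ) * ε * Real.log 2 ≤ (2:ℝ) ^ ((a:ℝ) * ε) := by
        rw [Real.rpow_def_of_pos (by norm_num : (0:ℝ) < 2)]
        calc (a:ℝ) * ε * Real.log 2 ≤ (a:ℝ) * ε * Real.log 2 + 1 := by linarith
          _ = Real.log 2 * ((a:ℝ) * ε) + 1 := by ring
          _ ≤ Real.exp (Real.log 2 * ((a:ℝ) * ε)) := Real.add_one_le_exp _
      have hmain : (a:ℝ) + 1 ≤ K * (2:ℝ) ^ ((a:ℝ) * ε) := by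
        have haux : (a:ℝ) ≤ (2:ℝ) ^ ((a:ℝ) * ε) / (ε * Real.log 2) := by
          rw [le_div_iff₀ (by positivity)]
          calc (a:ℝ) * (ε * Real.log 2) = (a:ℝ) * ε * Real.log 2 := by ring
            _ ≤ (2:ℝ) ^ ((a:ℝ) * ε) := h2'
        rw [hKdef, add_mul, one_mul, div_mul_eq_mul_div, one_mul]
        linarith
      have hfin : K * (2:ℝ) ^ ((a:ℝ) * ε) ≤ K * (p:ℝ) ^ ((a:ℝ) * ε) :=
        mul_le_mul_of_nonneg_left h2a (by linarith)
      rw [hE]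
      push_cast
      linarith
  -- main computation
  set pf := n.primeFactors with hpf
  have hcard : ((n.divisors.card : ℕ):ℝ)
      = ∏ p ∈ pf, ((n.factorization p + 1 : ℕ) : ℝ) := by
    rw [Nat.card_divisors hn]
    push_cast
    rfl
  have hfacR : ∏ p ∈ pf, (p:ℝ) ^ (n.factorization p) = (n:ℝ) := by
    have h := Nat.factorization_prod_pow_eq_self hn
    rw [Nat.prod_factorization_eq_prod_primeFactors] at h
    calc ∏ p ∈ pf, (p:ℝ) ^ (n.factorization p)
        = ((∏ p ∈ pf, p ^ (n.factorization p) : ℕ) : ℝ) := by push_cast; rfl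
      _ = (n:ℝ) := by rw [h]
  have hprodpow : (n:ℝ) ^ ε = ∏ p ∈ pf, ((p:ℝ) ^ (n.factorization p)) ^ ε := by
    rw [← hfacR, ← Real.finset_prod_rpow _ _ (fun p _ => by positivity) ε]
  have step1 : ((n.divisors.card : ℕ):ℝ)
      ≤ ∏ p ∈ pf, ((if 2 ≤ (p:ℝ) ^ ε then 1 else K) * ((p:ℝ) ^ (n.factorization p)) ^ ε) := by
    rw [hcard]
    refine Finset.prod_le_prod (fun p _ => by positivity) (fun p hp => ?_)
    exact key p (Nat.prime_of_mem_primeFactors hp) (n.factorization p)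
  rw [Finset.prod_mul_distrib] at step1
  have hW : ∏ p ∈ pf, (if 2 ≤ (p:ℝ) ^ ε then 1 else K) ≤ K ^ (N + 1) := by
    rw [← Finset.prod_filter_mul_prod_filter_not pf (fun p : ℕ => (2:ℝ) ≤ (p:ℝ) ^ ε)]
    have e1 : ∏ p ∈ pf.filter (fun p : ℕ => (2:ℝ) ≤ (p:ℝ) ^ ε), (if 2 ≤ (p:ℝ) ^ ε then (1:ℝ) else K) = 1 := by
      refine Finset.prod_eq_one (fun p hp => ?_)
      rw [if_pos (Finset.mem_filter.mp hp).2]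
    have e2 : ∏ p ∈ pf.filter (fun p : ℕ => ¬ (2:ℝ) ≤ (p:ℝ) ^ ε), (if 2 ≤ (p:ℝ) ^ ε then (1:ℝ) else K)
        = K ^ (pf.filter (fun p : ℕ => ¬ (2:ℝ) ≤ (p:ℝ) ^ ε)).card := by
      rw [Finset.prod_congr rfl (fun p hp => if_neg (Finset.mem_filter.mp hp).2),
        Finset.prod_const]
    rw [e1, e2, one_mul]
    have hsub : pf.filter (fun p : ℕ => ¬ (2:ℝ) ≤ (p:ℝ) ^ ε) ⊆ Finset.range (N + 1) := by
      intro p hp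
      obtain ⟨hppf, hplt⟩ := Finset.mem_filter.mp hp
      rw [Finset.mem_range]
      by_contra hge
      push_neg at hge
      have hpN : ((2:ℝ) ^ (1/ε)) ≤ (p:ℝ) := by
        calc (2:ℝ) ^ (1/ε) ≤ (N:ℝ) := Nat.le_ceil _
          _ ≤ (p:ℝ) := by exact_mod_cast Nat.le_of_succ_le hge
      have : (2:ℝ) ≤ (p:ℝ) ^ ε := by
        calc (2:ℝ) = ((2:ℝ) ^ (1/ε)) ^ ε := by
              rw [← Real.rpow_mul (by norm_num : (0:ℝ) ≤ 2), one_div_mul_cancel hε.ne',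
                Real.rpow_one]
          _ ≤ (p:ℝ) ^ ε := Real.rpow_le_rpow (by positivity) hpN hε.le
      exact hplt this
    have hcardle : (pf.filter (fun p : ℕ => ¬ (2:ℝ) ≤ (p:ℝ) ^ ε)).card ≤ N + 1 := by
      refine le_trans (Finset.card_le_card hsub) (le_of_eq (Finset.card_range _))
    exact pow_le_pow_right₀ hK1 hcardle
  calc ((n.divisors.card : ℕ):ℝ)
      ≤ (∏ p ∈ pf, (if 2 ≤ (p:ℝ) ^ ε then 1 else K)) *
          ∏ p ∈ pf, ((p:ℝ) ^ (n.factorization p)) ^ ε := step1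
    _ ≤ K ^ (N + 1) * ∏ p ∈ pf, ((p:ℝ) ^ (n.factorization p)) ^ ε := by
        apply mul_le_mul_of_nonneg_right hW
        exact Finset.prod_nonneg (fun p _ => by positivity)
    _ = K ^ (N + 1) * (n:ℝ) ^ ε := by rw [← hprodpow]

lemma count_bound (q d n₁ : ℕ) (l : ℤ) (hd : d ≠ 0) (hn : n₁ ≠ 0) :
    d * ((Finset.range q).filter (fun u : ℕ => (d:ℤ) ∣ l + (u:ℤ) * (n₁:ℤ))).card ≤ n₁ * q + d := by
  set h := Nat.gcd n₁ d with hh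
  have hh0 : h ≠ 0 := Nat.gcd_ne_zero_right hd
  set d' := d / h with hd'
  have hhd : h ∣ d := Nat.gcd_dvd_right n₁ d
  have hhn : h ∣ n₁ := Nat.gcd_dvd_left n₁ d
  have hd'h : d' * h = d := Nat.div_mul_cancel hhd
  have hd'0 : d' ≠ 0 := by
    intro h0; rw [h0, zero_mul] at hd'h; exact hd hd'h.symm
  have hcop : Nat.Coprime (n₁ / h) d' := Nat.coprime_div_gcd_div_gcd (Nat.pos_of_ne_zero hh0)
  -- card bound
  have hcard : ((Finset.range q).filter (fun u : ℕ => (d:ℤ) ∣ l + (u:ℤ) * (n₁:ℤ))).card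
      ≤ q / d' + 1 := by
    have : ((Finset.range q).filter (fun u : ℕ => (d:ℤ) ∣ l + (u:ℤ) * (n₁:ℤ))).card
        ≤ (Finset.range (q / d' + 1)).card := by
      apply Finset.card_le_card_of_injOn (fun u => u / d')
      · intro u hu
        simp only [Finset.mem_coe, Finset.mem_filter, Finset.mem_range] at hu ⊢
        have := Nat.div_le_div_right (c := d') (Nat.le_of_lt_succ (Nat.lt_succ_of_lt hu.1))
        omega
      · intro u hu v hv huv
        simp only [Finset.coe_filter, Set.mem_setOf_eq, Finset.mem_range] at hu hv
        -- d' divides u - v  (as integers)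
        have hdvd2 : (d' : ℤ) ∣ (u : ℤ) - (v : ℤ) := by
          have h1 : (d : ℤ) ∣ ((u : ℤ) - (v : ℤ)) * (n₁ : ℤ) := by
            have := dvd_sub hu.2 hv.2
            have e : (l + (u:ℤ) * n₁) - (l + (v:ℤ) * n₁) = ((u:ℤ) - v) * n₁ := by ring
            rwa [e] at this
          have h2 : (d' : ℤ) * (h : ℤ) ∣ ((u : ℤ) - (v : ℤ)) * ((n₁ / h : ℕ) : ℤ) * (h : ℤ) := by
            have e : ((u : ℤ) - v) * ((n₁/h : ℕ) : ℤ) * (h:ℤ) = ((u:ℤ) - v) * (n₁:ℤ) := by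
              rw [mul_assoc]
              congr 1
              exact_mod_cast congrArg (Nat.cast : ℕ → ℤ) (Nat.div_mul_cancel hhn)
            rw [e]
            exact_mod_cast (by exact_mod_cast congrArg (Nat.cast : ℕ → ℤ) hd'h : ((d':ℤ) * h = (d:ℤ))) ▸ h1
          have h3 : (d' : ℤ) ∣ ((u : ℤ) - (v : ℤ)) * ((n₁ / h : ℕ) : ℤ) := by
            have hh0' : (h : ℤ) ≠ 0 := Int.natCast_ne_zero.mpr hh0
            exact (mul_dvd_mul_iff_right hh0').mp h2
          have hcop' : IsCoprime ((n₁/h : ℕ) : ℤ) (d' : ℤ) := by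
            rw [Int.isCoprime_iff_gcd_eq_one]
            exact_mod_cast hcop
          exact hcop'.symm.dvd_of_dvd_mul_right h3
        -- conclude u = v
        have hmod : u % d' = v % d' := by
          have h4 : (v:ℤ) % (d':ℤ) = (u:ℤ) % (d':ℤ) := Int.modEq_iff_dvd.mpr hdvd2
          have h5 : ((u % d' : ℕ) : ℤ) = ((v % d' : ℕ) : ℤ) := by push_cast; exact h4.symm
          exact_mod_cast h5
        have huv' : u / d' = v / d' := huv
        have hij : d' * (u / d') = d' * (v / d') := by rw [huv']
        have hu' := Nat.div_add_mod u d'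
        have hv' := Nat.div_add_mod v d'
        omega
    simpa using this
  -- conclude
  have h1 : d * (q / d' + 1) = d * (q / d') + d := by ring
  have h2 : d * (q / d') ≤ h * q := by
    have hle : d' * (q / d') ≤ q := by
      rw [mul_comm]; exact Nat.div_mul_le_self q d'
    calc d * (q / d') = h * (d' * (q / d')) := by rw [← hd'h]; ring
      _ ≤ h * q := Nat.mul_le_mul_left h hle
  have h3 : h ≤ n₁ := Nat.le_of_dvd (Nat.pos_of_ne_zero hn) hhn
  calc d * ((Finset.range q).filter (fun u : ℕ => (d:ℤ) ∣ l + (u:ℤ) * (n₁:ℤ))).card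
      ≤ d * (q / d' + 1) := Nat.mul_le_mul_left d hcard
    _ = d * (q / d') + d := h1
    _ ≤ h * q + d := by omega
    _ ≤ n₁ * q + d := by
        have := Nat.mul_le_mul_right q h3
        omega

lemma norm_e2pi_frac (a : ℤ) (x q : ℕ) : ‖e2pi ((a:ℂ) * ((x:ℂ) / (q:ℂ)))‖ = 1 := by
  have h : (a:ℂ) * ((x:ℂ)/(q:ℂ)) = ((((a:ℝ) * ((x:ℝ)/(q:ℝ))) : ℝ) : ℂ) := by push_cast; ring
  rw [h, norm_e2pi]

lemma units_sum_norm_bound (q c n₁ : ℕ) (hq : q ≠ 0) (hc : c ≠ 0) (hn : n₁ ≠ 0) (l : ℤ) :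
    haveI : NeZero q := ⟨hq⟩
    (∑ v : (ZMod q)ˣ, ∑ d ∈ c.divisors,
        (if (d:ℤ) ∣ l + (((v : ZMod q).val : ℕ) : ℤ) * ((n₁ : ℕ) : ℤ) then (d:ℝ) else 0))
      ≤ (c.divisors.card : ℝ) * ((n₁ * q : ℕ) + (c : ℕ)) := by
  haveI : NeZero q := ⟨hq⟩
  set F : ℕ → ℝ := fun u => ∑ d ∈ c.divisors, (if (d:ℤ) ∣ l + (u : ℤ) * ((n₁ : ℕ) : ℤ) then (d:ℝ) else 0) with hF
  have hFnonneg : ∀ u, 0 ≤ F u := by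
    intro u
    apply Finset.sum_nonneg
    intro d _
    split <;> positivity
  have step1 : (∑ v : (ZMod q)ˣ, F (v : ZMod q).val) ≤ ∑ u ∈ Finset.range q, F u := by
    rw [← Finset.sum_image (fun (x : (ZMod q)ˣ) _ y _ h => Units.ext (ZMod.val_injective q h))]
    apply Finset.sum_le_sum_of_subset_of_nonneg
    · intro x hx
      simp only [Finset.mem_image] at hx
      obtain ⟨v, _, rfl⟩ := hx
      exact Finset.mem_range.mpr (ZMod.val_lt _)
    · intro u _ _
      exact hFnonneg u
  have step2 : ∑ u ∈ Finset.range q, F u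
      ≤ (c.divisors.card : ℝ) * ((n₁ * q : ℕ) + (c : ℕ)) := by
    rw [hF, Finset.sum_comm]
    have inner : ∀ d ∈ c.divisors,
        (∑ u ∈ Finset.range q, (if (d:ℤ) ∣ l + (u : ℤ) * ((n₁ : ℕ) : ℤ) then (d:ℝ) else 0))
          ≤ ((n₁ * q : ℕ) + (c : ℕ) : ℝ) := by
      intro d hd
      obtain ⟨hdc, -⟩ := Nat.mem_divisors.mp hd
      have hd0 : d ≠ 0 := fun h => hc (by simpa [h] using hdc)
      rw [← Finset.sum_filter, Finset.sum_const, nsmul_eq_mul]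
      have hcount := count_bound q d n₁ l hd0 hn
      have hdlec : d ≤ c := Nat.le_of_dvd (Nat.pos_of_ne_zero hc) hdc
      have : d * ((Finset.range q).filter (fun u : ℕ => (d:ℤ) ∣ l + (u:ℤ) * (n₁:ℤ))).card
          ≤ n₁ * q + c := le_trans hcount (by omega)
      calc (((Finset.range q).filter (fun u : ℕ => (d:ℤ) ∣ l + (u:ℤ) * (n₁:ℤ))).card : ℝ) * d
          = ((d * ((Finset.range q).filter (fun u : ℕ => (d:ℤ) ∣ l + (u:ℤ) * (n₁:ℤ))).card : ℕ) : ℝ) := by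
            push_cast; ring
        _ ≤ (((n₁ * q + c : ℕ)) : ℝ) := by exact_mod_cast this
        _ = ((n₁ * q : ℕ) + (c : ℕ) : ℝ) := by push_cast; ring
    calc ∑ d ∈ c.divisors, (∑ u ∈ Finset.range q, (if (d:ℤ) ∣ l + (u : ℤ) * ((n₁ : ℕ) : ℤ) then (d:ℝ) else 0))
        ≤ ∑ d ∈ c.divisors, ((n₁ * q : ℕ) + (c : ℕ) : ℝ) := Finset.sum_le_sum inner
      _ = (c.divisors.card : ℝ) * ((n₁ * q : ℕ) + (c : ℕ)) := by
          rw [Finset.sum_const, nsmul_eq_mul]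
  exact le_trans step1 step2

/-- **a character sum identity and its bound.** For positive integers
`c, m, n₁` with `n₁ | cm` and integers `l, n₂`:
`Σ_{0 ≤ d < c, (d,c)=1} e(ld/c) S(md, n₂; mc/n₁)
  = Σ_{u ū ≡ 1 (mod mc/n₁)} S(0, l + u n₁; c) e(n₂ ū / (mc/n₁))`,
and consequently (since the Ramanujan sum `S(0,a;c)` is bounded by `(a,c)`), the left-hand
side is `O(m c^{1+ε})`. -/
theorem statement19 :
    (∀ (c m n₁ : ℕ+) (l n₂ : ℤ) (hdvd : (n₁ : ℕ) ∣ (m : ℕ) * (c : ℕ)),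
      haveI : NeZero ((m : ℕ) * (c : ℕ) / (n₁ : ℕ)) :=
        ⟨(Nat.div_pos (Nat.le_of_dvd (Nat.mul_pos m.pos c.pos) hdvd) n₁.pos).ne'⟩
      (∑ d ∈ Finset.filter (fun d => Nat.Coprime d c) (Finset.range c),
          e2pi ((l : ℂ) * (d : ℂ) / ((c : ℕ) : ℂ)) *
            kloos ((m : ℤ) * (d : ℤ)) n₂ ((m : ℕ) * (c : ℕ) / (n₁ : ℕ)))
        = ∑ v : (ZMod ((m : ℕ) * (c : ℕ) / (n₁ : ℕ)))ˣ,
            ramanujanSum (l + (((v : ZMod ((m : ℕ) * (c : ℕ) / (n₁ : ℕ))).val : ℕ) : ℤ) *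
              ((n₁ : ℕ) : ℤ)) (c : ℕ) *
              e2pi ((n₂ : ℂ) *
                ((((v⁻¹ : (ZMod ((m : ℕ) * (c : ℕ) / (n₁ : ℕ)))ˣ) :
                    ZMod ((m : ℕ) * (c : ℕ) / (n₁ : ℕ))).val : ℂ) /
                  (((m : ℕ) * (c : ℕ) / (n₁ : ℕ) : ℕ) : ℂ)))) ∧
    (∀ ε > (0 : ℝ), ∃ C > (0 : ℝ), ∀ (c m n₁ : ℕ+) (l n₂ : ℤ),
      (n₁ : ℕ) ∣ (m : ℕ) * (c : ℕ) →
      ‖∑ d ∈ Finset.filter (fun d => Nat.Coprime d c) (Finset.range c),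
          e2pi ((l : ℂ) * (d : ℂ) / ((c : ℕ) : ℂ)) *
            kloos ((m : ℤ) * (d : ℤ)) n₂ ((m : ℕ) * (c : ℕ) / (n₁ : ℕ))‖
        ≤ C * (m : ℝ) * ((c : ℕ) : ℝ) ^ (1 + ε)) := by
  constructor
  · intro c m n₁ l n₂ hdvd
    have hc : (c : ℕ) ≠ 0 := c.pos.ne'
    have hq : ((m : ℕ) * (c : ℕ) / (n₁ : ℕ)) ≠ 0 :=
      (Nat.div_pos (Nat.le_of_dvd (Nat.mul_pos m.pos c.pos) hdvd) n₁.pos).ne'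
    have hqn : ((m : ℕ) * (c : ℕ) / (n₁ : ℕ)) * (n₁ : ℕ) = (m : ℕ) * (c : ℕ) :=
      Nat.div_mul_cancel hdvd
    exact identity_aux (c : ℕ) (m : ℕ) (n₁ : ℕ) _ hc hq hqn l n₂
  · intro ε hε
    obtain ⟨D, hD0, hDb⟩ := divisor_bound hε
    refine ⟨2 * D, by positivity, ?_⟩
    intro c m n₁ l n₂ hdvd
    have hc : (c : ℕ) ≠ 0 := c.pos.ne'
    have hq : ((m : ℕ) * (c : ℕ) / (n₁ : ℕ)) ≠ 0 :=
      (Nat.div_pos (Nat.le_of_dvd (Nat.mul_pos m.pos c.pos) hdvd) n₁.pos).ne'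
    haveI : NeZero ((m : ℕ) * (c : ℕ) / (n₁ : ℕ)) := ⟨hq⟩
    have hqn : ((m : ℕ) * (c : ℕ) / (n₁ : ℕ)) * (n₁ : ℕ) = (m : ℕ) * (c : ℕ) :=
      Nat.div_mul_cancel hdvd
    rw [identity_aux (c : ℕ) (m : ℕ) (n₁ : ℕ) _ hc hq hqn l n₂]
    set q : ℕ := (m : ℕ) * (c : ℕ) / (n₁ : ℕ) with hqdef
    have hcpos : (0:ℝ) < ((c : ℕ) : ℝ) := by
      exact_mod_cast Nat.pos_of_ne_zero hc
    calc ‖∑ v : (ZMod q)ˣ,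
            ramanujanSum (l + (((v : ZMod q).val : ℕ) : ℤ) * ((n₁ : ℕ) : ℤ)) (c : ℕ) *
              e2pi ((n₂ : ℂ) * ((((v⁻¹ : (ZMod q)ˣ) : ZMod q).val : ℂ) / ((q : ℕ) : ℂ)))‖
        ≤ ∑ v : (ZMod q)ˣ,
            ‖ramanujanSum (l + (((v : ZMod q).val : ℕ) : ℤ) * ((n₁ : ℕ) : ℤ)) (c : ℕ) *
              e2pi ((n₂ : ℂ) * ((((v⁻¹ : (ZMod q)ˣ) : ZMod q).val : ℂ) / ((q : ℕ) : ℂ)))‖ :=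
          norm_sum_le _ _
      _ = ∑ v : (ZMod q)ˣ,
            ‖ramanujanSum (l + (((v : ZMod q).val : ℕ) : ℤ) * ((n₁ : ℕ) : ℤ)) (c : ℕ)‖ := by
          refine Finset.sum_congr rfl fun v _ => ?_
          rw [norm_mul, norm_e2pi_frac, mul_one]
      _ ≤ ∑ v : (ZMod q)ˣ, ∑ d ∈ (c : ℕ).divisors,
            (if (d:ℤ) ∣ l + (((v : ZMod q).val : ℕ) : ℤ) * ((n₁ : ℕ) : ℤ) then (d:ℝ) else 0) :=
          Finset.sum_le_sum fun v _ => ramanujan_norm_le _ _ hc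
      _ ≤ ((c : ℕ).divisors.card : ℝ) * (((n₁ : ℕ) * q : ℕ) + ((c : ℕ) : ℝ)) :=
          units_sum_norm_bound q (c : ℕ) (n₁ : ℕ) hq hc n₁.pos.ne' l
      _ ≤ 2 * D * (m : ℝ) * ((c : ℕ) : ℝ) ^ (1 + ε) := by
          have hnq : ((n₁ : ℕ) * q : ℕ) = (m : ℕ) * (c : ℕ) := by
            rw [mul_comm]; exact hqn
          have hm1 : (1:ℝ) ≤ ((m : ℕ) : ℝ) := by exact_mod_cast m.one_le
          have hcd : ((c : ℕ).divisors.card : ℝ) ≤ D * ((c : ℕ) : ℝ) ^ ε := hDb (c : ℕ) hc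
          have hX : (((n₁ : ℕ) * q : ℕ) : ℝ) + ((c : ℕ) : ℝ) ≤ 2 * ((m : ℕ) : ℝ) * ((c : ℕ) : ℝ) := by
            rw [hnq]
            push_cast
            nlinarith [hcpos]
          have hXnn : (0:ℝ) ≤ (((n₁ : ℕ) * q : ℕ) : ℝ) + ((c : ℕ) : ℝ) := by positivity
          have hcdnn : (0:ℝ) ≤ ((c : ℕ).divisors.card : ℝ) := by positivity
          calc ((c : ℕ).divisors.card : ℝ) * ((((n₁ : ℕ) * q : ℕ) : ℝ) + ((c : ℕ) : ℝ))
              ≤ (D * ((c : ℕ) : ℝ) ^ ε) * (2 * ((m : ℕ) : ℝ) * ((c : ℕ) : ℝ)) :=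
                mul_le_mul hcd hX hXnn (by positivity)
            _ = 2 * D * ((m : ℕ) : ℝ) * (((c : ℕ) : ℝ) ^ ε * ((c : ℕ) : ℝ) ^ (1:ℝ)) := by
                rw [Real.rpow_one]; ring
            _ = 2 * D * (m : ℝ) * ((c : ℕ) : ℝ) ^ (1 + ε) := by
                rw [← Real.rpow_add hcpos, add_comm]

end
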